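/- Let n ≥ 3, let δ = (1 2) and r = (1 2 … n) in S_n, and let dist denote the word metric on S_n with respect to the generating set {δ, r, r^{-1}}. For integers i, j, the distance between r^i and r^j equals the Lee distance min(|i - j| mod n, n - (|i - j| mod n)). -/

import Mathlib

/-- The transposition `δ = (1 2)` in `S_n` (0-indexed: swaps `0` and `1`). -/
def delta (n : ℕ) (hn : 2 ≤ n) : Equiv.Perm (Fin n) :=
  Equiv.swap ⟨0, by omega⟩ ⟨1, by omega⟩

/-- The symmetric generating set `{(1 2), (1 2 … n), (1 n … 2)}` of `S_n`. -/
def gens (n : ℕ) (hn : 2 ≤ n) : Set (Equiv.Perm (Fin n)) :=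
  {delta n hn, finRotate n, (finRotate n)⁻¹}

/-- `IsMinWordLen n hn g d` says that `d` is the minimal length of a word in the
generators `{(1 2), (1 2 … n), (1 n … 2)}` whose product is `g`; i.e. the distance
in the Cayley graph from `1` to `g` is exactly `d`. -/
def IsMinWordLen (n : ℕ) (hn : 2 ≤ n) (g : Equiv.Perm (Fin n)) (d : ℕ) : Prop :=
  (∃ l : List (Equiv.Perm (Fin n)),
      (∀ x ∈ l, x ∈ gens n hn) ∧ l.prod = g ∧ l.length = d) ∧
  (∀ l : List (Equiv.Perm (Fin n)),
      (∀ x ∈ l, x ∈ gens n hn) → l.prod = g → d ≤ l.length)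

namespace Stmt6Aux

open Fin.CommRing

/-- Lee norm on `Fin (N+1)`. -/
def lee {N : ℕ} (z : Fin (N + 1)) : ℕ := min z.val (-z).val

lemma lee_neg {N : ℕ} (z : Fin (N + 1)) : lee (-z) = lee z := by
  simp [lee, min_comm]

lemma lee_add_one {N : ℕ} (hN : 1 ≤ N) (z : Fin (N + 1)) : lee (z + 1) ≤ lee z + 1 := by
  have h1 : ((1 : Fin (N + 1)) : ℕ) = 1 := by
    rw [Fin.val_one']
    exact Nat.mod_eq_of_lt (by omega)
  obtain ⟨v, hvlt⟩ := z
  simp only [lee, Fin.add_def, Fin.neg_def, h1]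
  set n := N + 1 with hn
  by_cases hv1 : v + 1 = n
  · rw [hv1, Nat.mod_self]
    simp
  · have hA : (v + 1) % n = v + 1 := Nat.mod_eq_of_lt (by omega)
    rw [hA]
    by_cases hv0 : v = 0
    · subst hv0
      have hB : (n - 1) % n = n - 1 := Nat.mod_eq_of_lt (by omega)
      rw [hB, Nat.sub_zero, Nat.mod_self]
      omega
    · have hB : (n - (v + 1)) % n = n - (v + 1) := Nat.mod_eq_of_lt (by omega)
      have hC : (n - v) % n = n - v := Nat.mod_eq_of_lt (by omega)
      rw [hB, hC]
      omega

lemma lee_sub_one {N : ℕ} (hN : 1 ≤ N) (z : Fin (N + 1)) : lee (z - 1) ≤ lee z + 1 := by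
  have h : z - 1 = -((-z) + 1) := by ring
  rw [h, lee_neg]
  calc lee (-z + 1) ≤ lee (-z) + 1 := lee_add_one hN _
    _ = lee z + 1 := by rw [lee_neg]

lemma finRotate_pow_apply {N : ℕ} (k : ℕ) (x : Fin (N + 1)) :
    ((finRotate (N + 1)) ^ k) x = x + (k : Fin (N + 1)) := by
  induction k with
  | zero => simp
  | succ m ih =>
    rw [pow_succ', Equiv.Perm.mul_apply, ih, finRotate_succ_apply]
    push_cast
    ring

lemma finRotate_pow_card {N : ℕ} : (finRotate (N + 1)) ^ (N + 1) = 1 := by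
  ext x
  rw [finRotate_pow_apply]
  simp [Fin.natCast_self]

lemma finRotate_inv_apply {N : ℕ} (x : Fin (N + 1)) :
    (finRotate (N + 1))⁻¹ x = x - 1 := by
  rw [Equiv.Perm.inv_def, Equiv.symm_apply_eq, finRotate_succ_apply]
  ring

lemma gens_step {N : ℕ} (hn : 2 ≤ N + 1) (s : Equiv.Perm (Fin (N + 1)))
    (hs : s ∈ gens (N + 1) hn) (y a : Fin (N + 1)) :
    lee (s y - a) ≤ lee (y - a) + 1 := by
  have hN : 1 ≤ N := by omega
  have e0 : (⟨0, by omega⟩ : Fin (N + 1)) = 0 := rfl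
  have e1 : (⟨1, by omega⟩ : Fin (N + 1)) = 1 := by
    apply Fin.ext
    rw [Fin.val_one']
    exact (Nat.mod_eq_of_lt (by omega)).symm
  simp only [gens, Set.mem_insert_iff, Set.mem_singleton_iff] at hs
  rcases hs with hs | hs | hs
  · -- delta
    subst hs
    unfold delta
    rw [e0, e1]
    by_cases h0 : y = 0
    · subst h0
      rw [Equiv.swap_apply_left]
      have he : (1 : Fin (N + 1)) = 0 + 1 := by rw [zero_add]
      rw [he, add_sub_right_comm]
      exact lee_add_one hN _
    · by_cases h1 : y = 1
      · subst h1
        rw [Equiv.swap_apply_right]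
        have he : (0 : Fin (N + 1)) = 1 - 1 := by rw [sub_self]
        rw [he, sub_right_comm]
        exact lee_sub_one hN _
      · rw [Equiv.swap_apply_of_ne_of_ne h0 h1]
        omega
  · subst hs
    rw [finRotate_succ_apply, add_sub_right_comm]
    exact lee_add_one hN _
  · subst hs
    rw [finRotate_inv_apply, sub_right_comm]
    exact lee_sub_one hN _

lemma lower_bound {N : ℕ} (hn : 2 ≤ N + 1) (l : List (Equiv.Perm (Fin (N + 1))))
    (hl : ∀ x ∈ l, x ∈ gens (N + 1) hn) (a : Fin (N + 1)) :
    lee (l.prod a - a) ≤ l.length := by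
  induction l with
  | nil => simp [lee]
  | cons s t ih =>
    rw [List.prod_cons, Equiv.Perm.mul_apply, List.length_cons]
    calc lee (s (t.prod a) - a) ≤ lee (t.prod a - a) + 1 :=
          gens_step hn s (hl s (by simp)) _ _
      _ ≤ t.length + 1 := by
          have := ih (fun x hx => hl x (by simp [hx]))
          omega

lemma isMin_pow {N : ℕ} (hn : 2 ≤ N + 1) (k : ℕ) (hk : k < N + 1) :
    IsMinWordLen (N + 1) hn ((finRotate (N + 1)) ^ k) (min k (N + 1 - k)) := by
  constructor
  · by_cases h : k ≤ N + 1 - k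
    · refine ⟨List.replicate k (finRotate (N + 1)), ?_, ?_, ?_⟩
      · intro x hx
        rw [List.eq_of_mem_replicate hx]
        simp [gens]
      · exact List.prod_replicate k _
      · rw [List.length_replicate]
        omega
    · refine ⟨List.replicate (N + 1 - k) (finRotate (N + 1))⁻¹, ?_, ?_, ?_⟩
      · intro x hx
        rw [List.eq_of_mem_replicate hx]
        simp [gens]
      · rw [List.prod_replicate, inv_pow]
        rw [inv_eq_iff_mul_eq_one, ← pow_add]
        have he : (N + 1 - k) + k = N + 1 := by omega
        rw [he, finRotate_pow_card]
      · rw [List.length_replicate]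
        omega
  · intro l hl hprod
    have hb := lower_bound hn l hl 0
    rw [hprod, finRotate_pow_apply, zero_add, sub_zero] at hb
    have hval : ((k : Fin (N + 1)) : ℕ) = k := by
      rw [Fin.val_natCast]
      exact Nat.mod_eq_of_lt hk
    have hneg : ((-(k : Fin (N + 1))).val) = (N + 1 - k) % (N + 1) := by
      rw [Fin.neg_def, hval]
    unfold lee at hb
    rw [hval, hneg] at hb
    by_cases hk0 : k = 0
    · subst hk0
      omega
    · have : (N + 1 - k) % (N + 1) = N + 1 - k := Nat.mod_eq_of_lt (by omega)
      rw [this] at hb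
      omega

end Stmt6Aux

/-- For `n ≥ 3`, the word-metric distance between `r^i` and `r^j`
(`r = (1 2 … n)`, generators `{(1 2), r, r⁻¹}`) equals the Lee distance
`min(|i-j| mod n, n - |i-j| mod n)`. -/
theorem stmt6 (n : ℕ) (hn : 3 ≤ n) (i j : ℤ) :
    IsMinWordLen n (by omega) (((finRotate n) ^ i)⁻¹ * (finRotate n) ^ j)
      (min ((i - j).natAbs % n) (n - (i - j).natAbs % n)) := by
  obtain ⟨N, rfl⟩ : ∃ N, n = N + 1 := ⟨n - 1, by omega⟩
  set n := N + 1 with hN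
  set r := finRotate n with hr
  have hnpos : (0 : ℤ) < (n : ℤ) := by positivity
  set k : ℕ := ((j - i) % (n : ℤ)).toNat with hkdef
  set m : ℕ := (i - j).natAbs % n with hmdef
  have hk0 : (0 : ℤ) ≤ (j - i) % (n : ℤ) := Int.emod_nonneg _ (by omega)
  have hklt : (j - i) % (n : ℤ) < n := Int.emod_lt_of_pos _ hnpos
  have hkZ : (k : ℤ) = (j - i) % (n : ℤ) := Int.toNat_of_nonneg hk0
  have hkn : k < n := by omega
  have hmn : m < n := Nat.mod_lt _ (by omega)
  -- identify the group element
  have hg : (r ^ i)⁻¹ * r ^ j = r ^ (k : ℕ) := by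
    have h1 : (r ^ i)⁻¹ * r ^ j = r ^ (j - i) := by
      rw [← zpow_neg, ← zpow_add, neg_add_eq_sub]
    have hcard : r ^ ((n : ℕ) : ℤ) = 1 := by
      rw [zpow_natCast]; exact Stmt6Aux.finRotate_pow_card
    have hsplit : (j - i) = (n : ℤ) * ((j - i) / n) + (k : ℤ) := by
      rw [hkZ]; exact (Int.mul_ediv_add_emod _ _).symm
    rw [h1, hsplit, zpow_add, zpow_mul, hcard, one_zpow, one_mul, zpow_natCast]
  -- identify the length
  have hlen : min m (n - m) = min k (n - k) := by
    have hmZcast : ((m : ℕ) : ℤ) = ((i - j).natAbs : ℤ) % (n : ℤ) := by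
      rw [hmdef, Int.natCast_mod]
    by_cases hij : 0 ≤ i - j
    · have habs : ((i - j).natAbs : ℤ) = i - j := Int.natAbs_of_nonneg hij
      have hmZ : (m : ℤ) = (i - j) % (n : ℤ) := by rw [hmZcast, habs]
      have hsum : ((k : ℤ) + (m : ℤ)) % (n : ℤ) = 0 := by
        rw [hkZ, hmZ, ← Int.add_emod]
        have : (j - i) + (i - j) = 0 := by ring
        rw [this, Int.zero_emod]
      obtain ⟨c, hc⟩ := Int.dvd_of_emod_eq_zero hsum
      have hb1 : (0 : ℤ) ≤ (k : ℤ) + (m : ℤ) := by positivity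
      have hb2 : (k : ℤ) + (m : ℤ) < 2 * (n : ℤ) := by push_cast; omega
      have hcases : c = 0 ∨ c = 1 := by
        rcases lt_or_ge c 0 with hcc | hcc
        · exfalso
          have hle : (n : ℤ) * c ≤ (n : ℤ) * (-1) :=
            mul_le_mul_of_nonneg_left (by omega) (le_of_lt hnpos)
          rw [mul_neg_one] at hle
          linarith
        · rcases lt_or_ge c 2 with h2 | h2
          · omega
          · exfalso
            have hle : (n : ℤ) * 2 ≤ (n : ℤ) * c :=
              mul_le_mul_of_nonneg_left h2 (le_of_lt hnpos)
            linarith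
      rcases hcases with rfl | rfl
      · rw [mul_zero] at hc; omega
      · rw [mul_one] at hc; omega
    · have habs : ((i - j).natAbs : ℤ) = j - i := by omega
      have hmZ : (m : ℤ) = (j - i) % (n : ℤ) := by rw [hmZcast, habs]
      have : (m : ℤ) = (k : ℤ) := by rw [hmZ, hkZ]
      have : m = k := by omega
      omega
  rw [hg, hlen]
  exact Stmt6Aux.isMin_pow _ k hkn
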